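/- Let G be a graph on n vertices with a vertex partition V(G) = V_1 ∪ ... ∪ V_r such that e(G) ≥ (r−1)n²/(2r) − 2εn² and Σᵢ e(G[Vᵢ]) ≤ εn², where ε > 0. Then for every i, | |V_i| − n/r | < 3√ε · n. -/

import Mathlib

open Finset

section aux

variable {V : Type*} [Fintype V] {r : ℕ}

private lemma ncard_eq_filter (part : V → Fin r) (i : Fin r) :
    ({v : V | part v = i} : Set V).ncard = (univ.filter (fun v => part v = i)).card := by
  classical
  rw [Set.ncard_eq_toFinset_card']
  congr 1
  ext v
  simp

private lemma edge_ncard_eq (G : SimpleGraph V) [DecidableRel G.Adj] :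
    G.edgeSet.ncard = G.edgeFinset.card := by
  rw [Set.ncard_eq_toFinset_card', SimpleGraph.edgeFinset]

/-- Darts with both endpoints in `s` are at most twice the induced edge count. -/
private lemma darts_inside_le (G : SimpleGraph V) [DecidableRel G.Adj] (s : Set V)
    [DecidablePred (· ∈ s)] :
    (univ.filter (fun d : G.Dart => d.fst ∈ s ∧ d.snd ∈ s)).card ≤
      2 * (G.induce s).edgeSet.ncard := by
  classical
  have hinj : Function.Injective
      (fun d : {d : G.Dart // d.fst ∈ s ∧ d.snd ∈ s} =>
        (⟨(⟨d.1.fst, d.2.1⟩, ⟨d.1.snd, d.2.2⟩), d.1.adj⟩ : (G.induce s).Dart)) := by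
    rintro ⟨d1, h1⟩ ⟨d2, h2⟩ h
    simp only [SimpleGraph.Dart.ext_iff, Prod.ext_iff, Subtype.ext_iff] at h ⊢
    exact h
  have := Fintype.card_le_of_injective _ hinj
  rw [Fintype.card_subtype] at this
  rw [edge_ncard_eq, ← SimpleGraph.dart_card_eq_twice_card_edges]
  exact this

/-- The key counting inequality:
`2 e(G) + ∑ |V_i|² ≤ n² + 2 ∑ e(G[V_i])`. -/
private lemma key_count (G : SimpleGraph V) [DecidableRel G.Adj] (part : V → Fin r) :
    2 * G.edgeSet.ncard + ∑ i : Fin r, (univ.filter (fun v => part v = i)).card ^ 2 ≤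
      (Fintype.card V) ^ 2 +
        2 * ∑ i : Fin r, (G.induce {v : V | part v = i}).edgeSet.ncard := by
  classical
  -- split darts
  have hdarts : 2 * G.edgeSet.ncard = Fintype.card G.Dart := by
    rw [edge_ncard_eq, SimpleGraph.dart_card_eq_twice_card_edges]
  have hsplit : (Fintype.card G.Dart)
      = (univ.filter (fun d : G.Dart => part d.fst = part d.snd)).card
        + (univ.filter (fun d : G.Dart => ¬ part d.fst = part d.snd)).card := by
    rw [← card_univ, card_filter_add_card_filter_not]
  -- same-part darts
  have hsame : (univ.filter (fun d : G.Dart => part d.fst = part d.snd)).card ≤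
      2 * ∑ i : Fin r, (G.induce {v : V | part v = i}).edgeSet.ncard := by
    rw [card_eq_sum_card_fiberwise (f := fun d : G.Dart => part d.fst)
      (t := univ) (fun _ _ => mem_univ _), Finset.mul_sum]
    refine Finset.sum_le_sum fun i _ => ?_
    refine le_trans (le_trans (Finset.card_le_card ?_) (darts_inside_le G {v | part v = i}))
      le_rfl
    intro d hd
    simp only [mem_filter, mem_univ, true_and, Set.mem_setOf_eq] at hd ⊢
    refine ⟨hd.2, ?_⟩
    rw [← hd.1]; exact hd.2
  -- different-part darts
  have hdiff : (univ.filter (fun d : G.Dart => ¬ part d.fst = part d.snd)).card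
      ≤ (univ.filter (fun p : V × V => ¬ part p.1 = part p.2)).card := by
    apply Finset.card_le_card_of_injOn (fun d => d.toProd)
    · intro d hd
      simp only [Finset.mem_coe, mem_filter, mem_univ, true_and] at hd ⊢
      exact hd
    · exact fun a _ b _ h => SimpleGraph.Dart.toProd_injective h
  -- pairs with equal parts
  have hpairs : (univ.filter (fun p : V × V => part p.1 = part p.2)).card
      = ∑ i : Fin r, (univ.filter (fun v => part v = i)).card ^ 2 := by
    rw [card_eq_sum_card_fiberwise (f := fun p : V × V => part p.1)
      (t := univ) (fun _ _ => mem_univ _)]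
    refine Finset.sum_congr rfl fun i _ => ?_
    have : (univ.filter (fun p : V × V => part p.1 = part p.2)).filter
        (fun p => part p.1 = i)
        = (univ.filter (fun v => part v = i)) ×ˢ (univ.filter (fun v => part v = i)) := by
      ext ⟨u, v⟩
      simp only [mem_filter, mem_univ, true_and, Finset.mem_product]
      constructor
      · rintro ⟨h1, h2⟩; exact ⟨h2, h1 ▸ h2⟩
      · rintro ⟨h1, h2⟩; exact ⟨h1.trans h2.symm, h1⟩
    rw [this, Finset.card_product, sq]
  have hsq : (univ.filter (fun p : V × V => ¬ part p.1 = part p.2)).card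
      + ∑ i : Fin r, (univ.filter (fun v => part v = i)).card ^ 2
      = (Fintype.card V) ^ 2 := by
    rw [← hpairs, add_comm, card_filter_add_card_filter_not, card_univ,
      Fintype.card_prod, sq]
  omega
end aux

/-- If `G` has a vertex partition into `r` parts (fibers of `part`) with
`e(G) ≥ (r-1)n²/(2r) - 2εn²` and at most `εn²` edges inside parts, then every part
has size within `3√ε·n` of `n/r`. -/
theorem stmt_6 {V : Type*} [Fintype V] (G : SimpleGraph V) (r : ℕ) (hr : 2 ≤ r)
    (part : V → Fin r) (ε : ℝ) (hε : 0 < ε) (hn : 0 < Fintype.card V)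
    (hbig : ((r : ℝ) - 1) * (Fintype.card V : ℝ) ^ 2 / (2 * r) -
        2 * ε * (Fintype.card V : ℝ) ^ 2 ≤ (G.edgeSet.ncard : ℝ))
    (hinside : (∑ i : Fin r, ((G.induce {v : V | part v = i}).edgeSet.ncard : ℝ)) ≤
        ε * (Fintype.card V : ℝ) ^ 2) :
    ∀ i : Fin r,
      |(({v : V | part v = i} : Set V).ncard : ℝ) - (Fintype.card V : ℝ) / r| <
        3 * Real.sqrt ε * (Fintype.card V : ℝ) := by
  classical
  intro i
  set n : ℝ := (Fintype.card V : ℝ) with hn_def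
  have hn0 : (0:ℝ) < n := by rw [hn_def]; exact_mod_cast hn
  set a : Fin r → ℝ := fun j => ((univ.filter (fun v => part v = j)).card : ℝ) with ha
  -- total sum of part sizes
  have hsum : ∑ j : Fin r, a j = n := by
    rw [hn_def, ha, ← Nat.cast_sum]
    norm_cast
    rw [← card_univ (α := V)]
    exact (card_eq_sum_card_fiberwise (f := part) (t := univ) (fun _ _ => mem_univ _)).symm
  -- key counting inequality over ℝ
  have hkey := key_count (V := V) G part
  have hkeyR : 2 * (G.edgeSet.ncard : ℝ) + ∑ j : Fin r, (a j) ^ 2 ≤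
      n ^ 2 + 2 * ∑ j : Fin r, ((G.induce {v : V | part v = j}).edgeSet.ncard : ℝ) := by
    have := (Nat.cast_le (α := ℝ)).2 hkey
    push_cast at this
    convert this using 2 <;> norm_num [ha]
  set R : ℝ := (r : ℝ) with hR
  have hR2 : (2:ℝ) ≤ R := by rw [hR]; exact_mod_cast hr
  have hR0 : (0:ℝ) < R := by linarith
  set S : ℝ := ∑ j : Fin r, (a j) ^ 2 with hSdef
  have h1' : (R - 1) * n ^ 2 ≤ ((G.edgeSet.ncard : ℝ) + 2 * ε * n ^ 2) * (2 * R) := by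
    rw [← div_le_iff₀ (by positivity : (0:ℝ) < 2 * R)]
    linarith [hbig]
  have hS' : R * S ≤ n ^ 2 + 6 * ε * n ^ 2 * R := by
    have k1 := mul_le_mul_of_nonneg_left hkeyR hR0.le
    have k2 := mul_le_mul_of_nonneg_left hinside hR0.le
    nlinarith [k1, k2, h1']
  -- Cauchy-Schwarz on the complement of i
  have hCS : (n - a i) ^ 2 ≤ (R - 1) * (S - (a i) ^ 2) := by
    have h1 : n - a i = ∑ j ∈ univ.erase i, a j := by
      rw [← hsum, Finset.sum_erase_eq_sub (mem_univ i)]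
    have h2 : S - (a i) ^ 2 = ∑ j ∈ univ.erase i, (a j) ^ 2 := by
      rw [hSdef, Finset.sum_erase_eq_sub (mem_univ i)]
    have h3 := sq_sum_le_card_mul_sum_sq (s := univ.erase i) (f := a)
    have hcard : ((univ.erase i).card : ℝ) = R - 1 := by
      rw [Finset.card_erase_of_mem (mem_univ i), card_univ, Fintype.card_fin, hR]
      have h1r : (1:ℕ) ≤ r := by omega
      push_cast [Nat.cast_sub h1r] <;> ring
    rw [h1, h2, ← hcard]
    exact h3
  -- conclude: (R * a i - n)² < 9 ε R² n²
  have hmain : (R * a i - n) ^ 2 < 9 * ε * n ^ 2 * R ^ 2 := by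
    have c1 : R * (n - a i) ^ 2 ≤ R * ((R - 1) * (S - (a i) ^ 2)) :=
      mul_le_mul_of_nonneg_left hCS hR0.le
    have c2 : (R - 1) * (R * S) ≤ (R - 1) * (n ^ 2 + 6 * ε * n ^ 2 * R) :=
      mul_le_mul_of_nonneg_left hS' (by linarith)
    nlinarith [c1, c2, mul_pos hε (mul_pos (mul_pos hn0 hn0) (mul_pos hR0 hR0)),
      mul_pos hε (mul_pos (mul_pos hn0 hn0) hR0), hR2]
  -- transfer to the goal
  have hgoal_eq : (({v : V | part v = i} : Set V).ncard : ℝ) = a i := by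
    rw [ncard_eq_filter part i]
  rw [hgoal_eq]
  have hsq : (a i - n / R) ^ 2 < (3 * Real.sqrt ε * n) ^ 2 := by
    have h9 : (3 * Real.sqrt ε * n) ^ 2 = 9 * ε * n ^ 2 := by
      rw [mul_pow, mul_pow, Real.sq_sqrt hε.le]; ring
    have heq : (a i - n / R) ^ 2 = (R * a i - n) ^ 2 / R ^ 2 := by
      field_simp
    rw [h9, heq, div_lt_iff₀ (by positivity)]
    exact hmain
  have := abs_lt_of_sq_lt_sq hsq (by positivity)
  exact this
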